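/- Let a > 0, b > 0, and c < πa. Then there exists a unique x > 0 satisfying (π/(2√x))(1 − e^{−2a√x}) = b x + c, and this x satisfies 0 < x < (πa − c)/b. If c ≥ πa, no positive solution exists. -/

import Mathlib

open Real

private lemma psi_strictAnti :
    StrictAntiOn (fun t : ℝ => (1 - Real.exp (-t)) / t) (Set.Ioi 0) := by
  apply strictAntiOn_of_deriv_neg (convex_Ioi 0)
  · apply ContinuousOn.div (by fun_prop) continuousOn_id
    intro x hx; exact ne_of_gt hx
  · intro t ht
    rw [interior_Ioi] at ht
    have ht0 : t ≠ 0 := ne_of_gt ht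
    have h1 : HasDerivAt (fun t : ℝ => 1 - Real.exp (-t)) (Real.exp (-t)) t := by
      have hn : HasDerivAt (fun t : ℝ => -t) (-1) t := (hasDerivAt_id t).neg
      have he := (Real.hasDerivAt_exp (-t)).comp t hn
      exact ((hasDerivAt_const t (1:ℝ)).sub he).congr_deriv (by ring)
    have hd := h1.div (hasDerivAt_id' (x := t)) ht0
    rw [show (fun t : ℝ => (1 - Real.exp (-t)) / t) = ((fun t : ℝ => 1 - Real.exp (-t)) / fun x => x) from rfl, hd.deriv]
    have hexp : t + 1 < Real.exp t := Real.add_one_lt_exp ht0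
    have hep : 0 < Real.exp t := Real.exp_pos t
    have hne : Real.exp (-t) = 1 / Real.exp t := by
      rw [Real.exp_neg]; ring
    rw [hne]
    have hpos : (0:ℝ) < t ^ 2 := by positivity
    apply div_neg_of_neg_of_pos _ hpos
    have h2 : 1 / Real.exp t * t - (1 - 1 / Real.exp t) * 1
        = (t + 1) / Real.exp t - 1 := by field_simp; ring
    have h3 : (t + 1) / Real.exp t < 1 := (div_lt_one hep).2 hexp
    rw [h2]; linarith

private lemma f_eq (a x : ℝ) (ha : 0 < a) (hx : 0 < x) :
    π / (2 * Real.sqrt x) * (1 - Real.exp (-2 * a * Real.sqrt x))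
      = π * a * ((1 - Real.exp (-(2 * a * Real.sqrt x))) / (2 * a * Real.sqrt x)) := by
  have hs : 0 < Real.sqrt x := Real.sqrt_pos.2 hx
  rw [show (-2 * a * Real.sqrt x) = -(2 * a * Real.sqrt x) by ring]
  field_simp

/-- f is strictly less than πa. -/
private lemma f_lt (a x : ℝ) (ha : 0 < a) (hx : 0 < x) :
    π / (2 * Real.sqrt x) * (1 - Real.exp (-2 * a * Real.sqrt x)) < π * a := by
  have hs : 0 < Real.sqrt x := Real.sqrt_pos.2 hx
  have ht : 0 < 2 * a * Real.sqrt x := by positivity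
  rw [f_eq a x ha hx]
  have h1 : -(2 * a * Real.sqrt x) + 1 < Real.exp (-(2 * a * Real.sqrt x)) :=
    Real.add_one_lt_exp (by linarith)
  have h2 : (1 - Real.exp (-(2 * a * Real.sqrt x))) / (2 * a * Real.sqrt x) < 1 :=
    (div_lt_one ht).2 (by linarith)
  have hpa : 0 < π * a := by positivity
  calc π * a * ((1 - Real.exp (-(2 * a * Real.sqrt x))) / (2 * a * Real.sqrt x))
      < π * a * 1 := by exact (mul_lt_mul_iff_right₀ hpa).2 h2
    _ = π * a := mul_one _

/-- lower bound near 0: f x ≥ πa (1 - 2 a √x). -/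
private lemma f_ge (a x : ℝ) (ha : 0 < a) (hx : 0 < x) :
    π * a * (1 - 2 * a * Real.sqrt x)
      ≤ π / (2 * Real.sqrt x) * (1 - Real.exp (-2 * a * Real.sqrt x)) := by
  have hs : 0 < Real.sqrt x := Real.sqrt_pos.2 hx
  have ht : 0 < 2 * a * Real.sqrt x := by positivity
  set t := 2 * a * Real.sqrt x with htdef
  rw [f_eq a x ha hx, ← htdef]
  have hpa : 0 < π * a := by positivity
  apply mul_le_mul_of_nonneg_left _ (le_of_lt hpa)
  -- 1 - t ≤ (1 - exp(-t))/t, since exp(-t) ≤ 1/(1+t) ... use exp(-t) ≤ 1 - t + t^2 ?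
  -- instead: 1 - exp(-t) ≥ t * exp(-t) ≥ t*(1-t) ... then divide
  have hexp1 : t + 1 ≤ Real.exp t := Real.add_one_le_exp t
  have hep : 0 < Real.exp t := Real.exp_pos t
  have hne : Real.exp (-t) = 1 / Real.exp t := by rw [Real.exp_neg]; ring
  rw [le_div_iff₀ ht, hne]
  have hinv : 1 / Real.exp t ≤ 1 / (t + 1) :=
    one_div_le_one_div_of_le (by linarith) hexp1
  have key : 1 / (t + 1) ≤ 1 - t + t ^ 2 := by
    rw [div_le_iff₀ (by linarith : (0:ℝ) < t + 1)]
    nlinarith [pow_pos ht 3, ht.le]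
  nlinarith

private lemma f_anti (a : ℝ) (ha : 0 < a) {x y : ℝ} (hx : 0 < x) (hxy : x < y) :
    π / (2 * Real.sqrt y) * (1 - Real.exp (-2 * a * Real.sqrt y))
      < π / (2 * Real.sqrt x) * (1 - Real.exp (-2 * a * Real.sqrt x)) := by
  have hy : 0 < y := lt_trans hx hxy
  have hsx : 0 < Real.sqrt x := Real.sqrt_pos.2 hx
  have hsy : 0 < Real.sqrt y := Real.sqrt_pos.2 hy
  have hslt : Real.sqrt x < Real.sqrt y := Real.sqrt_lt_sqrt (le_of_lt hx) hxy
  rw [f_eq a x ha hx, f_eq a y ha hy]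
  have hpa : 0 < π * a := by positivity
  apply (mul_lt_mul_iff_right₀ hpa).2
  exact psi_strictAnti (by simp [Set.mem_Ioi]; positivity) (by simp [Set.mem_Ioi]; positivity)
    (by nlinarith)

theorem stmt_7 (a b c : ℝ) (ha : 0 < a) (hb : 0 < b) :
    (c < π * a →
      (∃! x : ℝ, 0 < x ∧
        π / (2 * Real.sqrt x) * (1 - Real.exp (-2 * a * Real.sqrt x)) = b * x + c) ∧
      (∀ x : ℝ, 0 < x →
        π / (2 * Real.sqrt x) * (1 - Real.exp (-2 * a * Real.sqrt x)) = b * x + c →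
        x < (π * a - c) / b)) ∧
    (π * a ≤ c →
      ¬ ∃ x : ℝ, 0 < x ∧
        π / (2 * Real.sqrt x) * (1 - Real.exp (-2 * a * Real.sqrt x)) = b * x + c) := by
  set f : ℝ → ℝ := fun x => π / (2 * Real.sqrt x) * (1 - Real.exp (-2 * a * Real.sqrt x))
    with hf
  constructor
  · intro hc
    set δ := π * a - c with hδdef
    have hδ : 0 < δ := by simp [hδdef]; linarith
    -- small point x₀ = s^2
    set s : ℝ := min 1 (δ / (2 * π * a ^ 2 + b + 1)) with hsdef
    have hden : (0:ℝ) < 2 * π * a ^ 2 + b + 1 := by positivity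
    have hspos : 0 < s := lt_min one_pos (by positivity)
    have hs1 : s ≤ 1 := min_le_left _ _
    have hs2 : s ≤ δ / (2 * π * a ^ 2 + b + 1) := min_le_right _ _
    set x₀ : ℝ := s ^ 2 with hx0def
    have hx0 : 0 < x₀ := by positivity
    have hsqrt0 : Real.sqrt x₀ = s := by
      rw [hx0def, Real.sqrt_sq hspos.le]
    have hgx0 : b * x₀ + c < f x₀ := by
      have h1 := f_ge a x₀ ha hx0
      rw [hsqrt0] at h1
      have h2 : (2 * π * a ^ 2 + b) * s < δ := by
        calc (2 * π * a ^ 2 + b) * s ≤ (2 * π * a ^ 2 + b) * (δ / (2 * π * a ^ 2 + b + 1)) := by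
              apply mul_le_mul_of_nonneg_left hs2 (by positivity)
          _ < δ := by
              have heq : (2 * π * a ^ 2 + b) * (δ / (2 * π * a ^ 2 + b + 1))
                  = δ * ((2 * π * a ^ 2 + b) / (2 * π * a ^ 2 + b + 1)) := by ring
              have hlt : (2 * π * a ^ 2 + b) / (2 * π * a ^ 2 + b + 1) < 1 :=
                (div_lt_one hden).2 (by linarith)
              rw [heq]
              nlinarith
      have hbx : b * x₀ ≤ b * s := by
        apply mul_le_mul_of_nonneg_left _ hb.le
        nlinarith
      have hfx0 : f x₀ = π / (2 * s) * (1 - Real.exp (-2 * a * s)) := by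
        simp only [hf, hsqrt0]
      rw [hfx0]
      nlinarith [h1, h2, hbx]
    -- large point X
    set X : ℝ := max 1 ((π / 2 + 1 - c) / b) with hXdef
    have hX1 : (1:ℝ) ≤ X := le_max_left _ _
    have hXpos : 0 < X := lt_of_lt_of_le one_pos hX1
    have hgX : f X < b * X + c := by
      have hsX : 1 ≤ Real.sqrt X := by
        rw [show (1:ℝ) = Real.sqrt 1 by simp]
        exact Real.sqrt_le_sqrt hX1
      have h1 : f X < π / (2 * Real.sqrt X) := by
        rw [hf]
        have hexp : 0 < Real.exp (-2 * a * Real.sqrt X) := Real.exp_pos _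
        have hfrac : 0 < π / (2 * Real.sqrt X) := by positivity
        nlinarith
      have h2 : π / (2 * Real.sqrt X) ≤ π / 2 := by
        apply div_le_div_of_nonneg_left pi_pos.le (by norm_num) (by linarith)
      have h3 : π / 2 + 1 - c ≤ b * X := by
        rw [hXdef]
        calc π / 2 + 1 - c = b * ((π / 2 + 1 - c) / b) := by field_simp
          _ ≤ b * max 1 ((π / 2 + 1 - c) / b) := by
              apply mul_le_mul_of_nonneg_left (le_max_right _ _) hb.le
      linarith
    have hx0X : x₀ ≤ X := by nlinarith
    have hcont : ContinuousOn (fun x => f x - (b * x + c)) (Set.Icc x₀ X) := by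
      apply ContinuousOn.sub _ (by fun_prop)
      apply ContinuousOn.mul
      · apply ContinuousOn.div continuousOn_const (by fun_prop)
        intro x hx
        have hxpos : 0 < x := lt_of_lt_of_le hx0 hx.1
        have := Real.sqrt_pos.2 hxpos
        positivity
      · fun_prop
    have hmem : (0:ℝ) ∈ Set.Icc ((fun x => f x - (b * x + c)) X)
        ((fun x => f x - (b * x + c)) x₀) := ⟨by simp; linarith, by simp; linarith⟩
    obtain ⟨x, hxmem, hgx⟩ := intermediate_value_Icc' hx0X hcont hmem
    have hxpos : 0 < x := lt_of_lt_of_le hx0 hxmem.1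
    have hxeq : f x = b * x + c := by
      have : f x - (b * x + c) = 0 := hgx
      linarith
    have hxeq' : π / (2 * Real.sqrt x) * (1 - Real.exp (-2 * a * Real.sqrt x)) = b * x + c := by
      simpa only [hf] using hxeq
    refine ⟨⟨x, ⟨hxpos, hxeq'⟩, ?_⟩, ?_⟩
    · rintro y ⟨hypos, hyeq⟩
      rcases lt_trichotomy y x with h | h | h
      · exfalso
        have := f_anti a ha hypos h
        rw [hxeq', hyeq] at this
        have h2 : b * y < b * x := mul_lt_mul_of_pos_left h hb
        linarith
      · exact h
      · exfalso
        have := f_anti a ha hxpos h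
        rw [hxeq', hyeq] at this
        have h2 : b * x < b * y := mul_lt_mul_of_pos_left h hb
        linarith
    · intro z hz hzeq
      have := f_lt a z ha hz
      rw [hzeq] at this
      rw [lt_div_iff₀ hb]
      linarith
  · rintro hc ⟨x, hx, hxeq⟩
    have h1 := f_lt a x ha hx
    have h2 : 0 < b * x := mul_pos hb hx
    linarith
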